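/- Let F̄ : ℝ → (0, 1] be nonincreasing with F̄(x) = 1 for all x ≤ 0, and suppose F̄ is log-convex on [0, ∞). Fix an integer r ≥ 1 and real numbers 0 = t_1 ≤ t_2 ≤ … ≤ t_r, and set t_{r+1} = ∞. Define the expected computing cost E[C] = Σ_{u=1}^{r} u · ∫_{t_u}^{t_{u+1}} Π_{i=1}^{u} F̄(s − t_i) ds. Then r · ∫_0^∞ F̄(x)^r dx ≤ E[C] ≤ ∫_0^∞ F̄(x) dx. -/

import Mathlib

open MeasureTheory
open scoped ENNReal

/-- `f` is log-convex on `D`: `f(θx + (1−θ)y) ≤ f(x)^θ f(y)^{1−θ}`. -/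
def LogConvexOn (D : Set ℝ) (f : ℝ → ℝ) : Prop :=
  ∀ ⦃x⦄, x ∈ D → ∀ ⦃y⦄, y ∈ D → ∀ ⦃θ : ℝ⦄, θ ∈ Set.Icc (0 : ℝ) 1 →
    f (θ * x + (1 - θ) * y) ≤ f x ^ θ * f y ^ (1 - θ)

section helpers

lemma log_convexOn {F : ℝ → ℝ} (hF0 : ∀ x, 0 < F x)
    (hlc : ∀ ⦃x⦄, x ∈ Set.Ici (0:ℝ) → ∀ ⦃y⦄, y ∈ Set.Ici (0:ℝ) → ∀ ⦃θ : ℝ⦄,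
      θ ∈ Set.Icc (0 : ℝ) 1 → F (θ * x + (1 - θ) * y) ≤ F x ^ θ * F y ^ (1 - θ)) :
    ConvexOn ℝ (Set.Ici 0) fun x => Real.log (F x) := by
  refine ⟨convex_Ici 0, ?_⟩
  intro x hx y hy a b ha hb hab
  have hb' : b = 1 - a := by linarith
  have h := hlc hx hy (θ := a) ⟨ha, by linarith⟩
  rw [← hb'] at h
  have hlog := Real.log_le_log (hF0 _) h
  rw [Real.log_mul (Real.rpow_pos_of_pos (hF0 x) _).ne' (Real.rpow_pos_of_pos (hF0 y) _).ne',
    Real.log_rpow (hF0 x),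
    Real.log_rpow (hF0 y)] at hlog
  simpa [smul_eq_mul] using hlog

lemma superadd_log {F : ℝ → ℝ} (hF0 : ∀ x, 0 < F x) (hF00 : F 0 = 1)
    (hc : ConvexOn ℝ (Set.Ici 0) fun x => Real.log (F x)) :
    ∀ x, 0 ≤ x → ∀ y, 0 ≤ y →
      Real.log (F x) + Real.log (F y) ≤ Real.log (F (x + y)) := by
  intro x hx y hy
  rcases eq_or_lt_of_le (by linarith : (0:ℝ) ≤ x + y) with hxy | hxy
  · have hx0 : x = 0 := by linarith
    have hy0 : y = 0 := by linarith
    simp [hx0, hy0, hF00]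
  · have hmem : x + y ∈ Set.Ici (0:ℝ) := le_of_lt hxy
    have h0mem : (0:ℝ) ∈ Set.Ici (0:ℝ) := Set.self_mem_Ici
    have h1 := hc.2 hmem h0mem (div_nonneg hx hxy.le) (div_nonneg hy hxy.le)
      (by field_simp)
    have h2 := hc.2 hmem h0mem (div_nonneg hy hxy.le) (div_nonneg hx hxy.le)
      (by field_simp; ring)
    rw [smul_zero, add_zero, smul_eq_mul, div_mul_cancel₀ _ hxy.ne'] at h1 h2
    have e1 : x / (x+y) * Real.log (F (x+y)) + y / (x+y) * Real.log (F (x+y))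
        = Real.log (F (x+y)) := by field_simp
    have hl0 : Real.log (F 0) = 0 := by simp [hF00]
    simp only [hl0, smul_eq_mul, mul_zero, add_zero] at h1 h2
    linarith

lemma sum_log_le {F : ℝ → ℝ} (hF0 : ∀ x, 0 < F x) (hF00 : F 0 = 1)
    (hc : ConvexOn ℝ (Set.Ici 0) fun x => Real.log (F x)) :
    ∀ (s : Finset ℕ) (x : ℕ → ℝ), (∀ i ∈ s, 0 ≤ x i) →
      ∑ i ∈ s, Real.log (F (x i)) ≤ Real.log (F (∑ i ∈ s, x i)) := by
  intro s
  induction s using Finset.induction_on with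
  | empty => intro x _; simp [hF00]
  | insert _ _ hnotmem ih =>
    rename_i a s'
    intro x hx
    rw [Finset.sum_insert hnotmem, Finset.sum_insert hnotmem]
    have h1 : ∑ i ∈ s', Real.log (F (x i)) ≤ Real.log (F (∑ i ∈ s', x i)) :=
      ih x fun i hi => hx i (Finset.mem_insert_of_mem hi)
    have h2 := superadd_log hF0 hF00 hc (x a) (hx a (Finset.mem_insert_self a s'))
      (∑ i ∈ s', x i) (Finset.sum_nonneg fun i hi => hx i (Finset.mem_insert_of_mem hi))
    linarith

/-- Superadditivity product form: `∏ F(xᵢ) ≤ F(∑ xᵢ)`. -/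
lemma prodF_le {F : ℝ → ℝ} (hF0 : ∀ x, 0 < F x) (hF00 : F 0 = 1)
    (hc : ConvexOn ℝ (Set.Ici 0) fun x => Real.log (F x))
    (s : Finset ℕ) (x : ℕ → ℝ) (hx : ∀ i ∈ s, 0 ≤ x i) :
    ∏ i ∈ s, F (x i) ≤ F (∑ i ∈ s, x i) := by
  have h := sum_log_le hF0 hF00 hc s x hx
  rw [← Real.log_prod (s := s) (f := fun i => F (x i)) fun i _ => (hF0 (x i)).ne'] at h
  exact (Real.log_le_log_iff (Finset.prod_pos fun i _ => hF0 (x i)) (hF0 _)).1 h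

/-- Jensen product form: `F((∑xᵢ)/n)^n ≤ ∏ F(xᵢ)` over a finset of card `n ≥ 1`. -/
lemma jensenF_le {F : ℝ → ℝ} (hF0 : ∀ x, 0 < F x)
    (hc : ConvexOn ℝ (Set.Ici 0) fun x => Real.log (F x))
    (s : Finset ℕ) (hs : s.Nonempty) (x : ℕ → ℝ) (hx : ∀ i ∈ s, 0 ≤ x i) :
    F ((∑ i ∈ s, x i) / s.card) ^ s.card ≤ ∏ i ∈ s, F (x i) := by
  have hcard : (0:ℝ) < s.card := by exact_mod_cast Finset.card_pos.2 hs
  have hj := hc.map_sum_le (t := s) (w := fun _ => (s.card : ℝ)⁻¹) (p := x)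
    (fun i _ => by positivity)
    (by rw [Finset.sum_const, nsmul_eq_mul, mul_inv_cancel₀ hcard.ne'])
    (fun i hi => hx i hi)
  have hsum : ∑ i ∈ s, (s.card : ℝ)⁻¹ • x i = (∑ i ∈ s, x i) / s.card := by
    rw [← Finset.smul_sum]; simp [smul_eq_mul, div_eq_inv_mul]
  rw [hsum] at hj
  have h2 : (s.card : ℝ) * Real.log (F ((∑ i ∈ s, x i) / s.card))
      ≤ ∑ i ∈ s, Real.log (F (x i)) := by
    calc (s.card : ℝ) * Real.log (F ((∑ i ∈ s, x i) / s.card))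
        ≤ (s.card : ℝ) * ∑ i ∈ s, (s.card : ℝ)⁻¹ * Real.log (F (x i)) := by
          exact mul_le_mul_of_nonneg_left hj hcard.le
      _ = ∑ i ∈ s, Real.log (F (x i)) := by
          rw [Finset.mul_sum]; apply Finset.sum_congr rfl; intro i _
          field_simp
  rw [← Real.log_pow, ← Real.log_prod (s := s) (f := fun i => F (x i)) fun i _ => (hF0 (x i)).ne'] at h2
  exact (Real.log_le_log_iff (pow_pos (hF0 _) _) (Finset.prod_pos fun i _ => hF0 (x i))).1 h2


/-- Affine substitution for lower Lebesgue integrals on ℝ. -/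
lemma lintegral_scale_shift {g : ℝ → ℝ≥0∞} (hg : Measurable g) {u : ℝ} (hu : 0 < u) (T : ℝ)
    {s : Set ℝ} (hs : MeasurableSet s) :
    ENNReal.ofReal u * ∫⁻ x in s, g x =
      ∫⁻ w in (fun w => (w + T) / u) ⁻¹' s, g ((w + T) / u) := by
  have hmeas : Measurable fun w : ℝ => (w + T) / u :=
    (measurable_id.add_const T).div_const u
  have hcomp : (fun w : ℝ => (w + T) / u) = (fun x : ℝ => u⁻¹ * x) ∘ fun w : ℝ => w + T := by
    funext w; simp [div_eq_inv_mul]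
  have hmap : Measure.map (fun w : ℝ => (w + T) / u) volume = ENNReal.ofReal u • volume := by
    rw [hcomp, ← Measure.map_map (measurable_const_mul u⁻¹) (measurable_add_const T),
      map_add_right_eq_self volume T, Real.map_volume_mul_left (inv_ne_zero hu.ne'),
      inv_inv, abs_of_pos hu]
  rw [← setLIntegral_map hs hg hmeas, hmap, Measure.restrict_smul, lintegral_smul_measure, smul_eq_mul]

end helpers

/-- For a log-convex tail distribution `F̄ : ℝ → (0,1]` (with `F̄ ≡ 1` on `(-∞,0]`),
the expected computing cost
`E[C] = Σ_{u=1}^{r} u ∫_{t_u}^{t_{u+1}} Π_{i=1}^{u} F̄(s − t_i) ds` (with `t_{r+1} = ∞`)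
satisfies `r E[X_{1:r}] ≤ E[C] ≤ E[X]`, i.e.
`r ∫_0^∞ F̄(x)^r dx ≤ E[C] ≤ ∫_0^∞ F̄(x) dx`. -/
theorem cost_bounds_logconvex (F : ℝ → ℝ)
    (hrange : ∀ x, F x ∈ Set.Ioc (0 : ℝ) 1)
    (hmono : Antitone F) (hneg : ∀ x ≤ (0 : ℝ), F x = 1)
    (hlc : LogConvexOn (Set.Ici 0) F)
    (r : ℕ) (hr : 1 ≤ r) (t : ℕ → ℝ) (ht1 : t 1 = 0)
    (htmono : ∀ u v, 1 ≤ u → u ≤ v → v ≤ r → t u ≤ t v) :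
    (r : ℝ≥0∞) * ∫⁻ x in Set.Ioi (0 : ℝ), ENNReal.ofReal (F x ^ r)
      ≤ (∑ u ∈ Finset.Ico 1 r, (u : ℝ≥0∞) *
            ∫⁻ s in Set.Ioc (t u) (t (u + 1)),
              ENNReal.ofReal (∏ i ∈ Finset.Icc 1 u, F (s - t i))) +
        (r : ℝ≥0∞) *
          ∫⁻ s in Set.Ioi (t r),
            ENNReal.ofReal (∏ i ∈ Finset.Icc 1 r, F (s - t i)) ∧
    (∑ u ∈ Finset.Ico 1 r, (u : ℝ≥0∞) *
          ∫⁻ s in Set.Ioc (t u) (t (u + 1)),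
            ENNReal.ofReal (∏ i ∈ Finset.Icc 1 u, F (s - t i))) +
      (r : ℝ≥0∞) *
        ∫⁻ s in Set.Ioi (t r),
          ENNReal.ofReal (∏ i ∈ Finset.Icc 1 r, F (s - t i))
      ≤ ∫⁻ x in Set.Ioi (0 : ℝ), ENNReal.ofReal (F x) := by
  classical
  have hF0 : ∀ x, 0 < F x := fun x => (hrange x).1
  have hF00 : F 0 = 1 := hneg 0 le_rfl
  have hFmeas : Measurable F := hmono.measurable
  have hc : ConvexOn ℝ (Set.Ici 0) fun x => Real.log (F x) := log_convexOn hF0 hlc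
  set T : ℕ → ℝ := fun u => ∑ i ∈ Finset.Icc 1 u, t i with hTdef
  set W : ℕ → ℝ := fun u => u * t u - T u with hWdef
  have hW1 : W 1 = 0 := by simp [hWdef, hTdef, ht1]
  have hTsucc : ∀ u : ℕ, 1 ≤ u → T (u + 1) = T u + t (u + 1) := by
    intro u hu
    simp only [hTdef]
    rw [Finset.sum_Icc_succ_top (by omega : 1 ≤ u + 1)]
  have hWs : ∀ u : ℕ, 1 ≤ u → W (u + 1) = u * t (u + 1) - T u := by
    intro u hu
    simp only [hWdef, hTsucc u hu]
    push_cast; ring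
  have hWmono : ∀ u : ℕ, 1 ≤ u → u + 1 ≤ r → W u ≤ W (u + 1) := by
    intro u hu hur
    rw [hWs u hu]
    simp only [hWdef]
    have h1 := htmono u (u + 1) hu (Nat.le_succ u) hur
    have h2 : (u : ℝ) * t u ≤ u * t (u + 1) :=
      mul_le_mul_of_nonneg_left h1 (Nat.cast_nonneg u)
    linarith
  have hGmeas : ∀ u : ℕ,
      Measurable fun s : ℝ => ENNReal.ofReal (∏ i ∈ Finset.Icc 1 u, F (s - t i)) := by
    intro u
    exact (Finset.measurable_prod _ fun i _ =>
      hFmeas.comp (measurable_id.sub_const (t i))).ennreal_ofReal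
  have hsub : ∀ u : ℕ, 1 ≤ u → ∀ G : ℝ → ℝ≥0∞, Measurable G → ∀ s : Set ℝ, MeasurableSet s →
      (u : ℝ≥0∞) * ∫⁻ x in s, G x
        = ∫⁻ w in (fun w => (w + T u) / (u : ℝ)) ⁻¹' s, G ((w + T u) / (u : ℝ)) := by
    intro u hu G hG s hs
    have hupos : (0 : ℝ) < u := by exact_mod_cast hu
    rw [← ENNReal.ofReal_natCast]
    exact lintegral_scale_shift hG hupos (T u) hs
  have hpreIoc : ∀ u : ℕ, 1 ≤ u → ∀ a b : ℝ,
      (fun w => (w + T u) / (u : ℝ)) ⁻¹' Set.Ioc a b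
        = Set.Ioc ((u : ℝ) * a - T u) ((u : ℝ) * b - T u) := by
    intro u hu a b
    have hupos : (0 : ℝ) < u := by exact_mod_cast hu
    ext w
    simp only [Set.mem_preimage, Set.mem_Ioc, lt_div_iff₀ hupos, div_le_iff₀ hupos]
    constructor <;> rintro ⟨h1, h2⟩ <;> constructor <;> nlinarith
  have hpreIoi : ∀ u : ℕ, 1 ≤ u → ∀ a : ℝ,
      (fun w => (w + T u) / (u : ℝ)) ⁻¹' Set.Ioi a = Set.Ioi ((u : ℝ) * a - T u) := by
    intro u hu a
    have hupos : (0 : ℝ) < u := by exact_mod_cast hu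
    ext w
    simp only [Set.mem_preimage, Set.mem_Ioi, lt_div_iff₀ hupos]
    constructor <;> intro h <;> nlinarith
  -- pointwise bounds on each piece
  have hkey : ∀ u : ℕ, 1 ≤ u → u ≤ r → ∀ w : ℝ, W u < w →
      ENNReal.ofReal (F (w / (r : ℝ)) ^ r)
          ≤ ENNReal.ofReal (∏ i ∈ Finset.Icc 1 u, F ((w + T u) / (u : ℝ) - t i))
        ∧ ENNReal.ofReal (∏ i ∈ Finset.Icc 1 u, F ((w + T u) / (u : ℝ) - t i))
          ≤ ENNReal.ofReal (F w) := by
    intro u hu hur w hw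
    have hupos : (0 : ℝ) < u := by exact_mod_cast hu
    set s : ℝ := (w + T u) / (u : ℝ) with hsdef
    have hus : (u : ℝ) * s = w + T u := by
      rw [hsdef]; field_simp
    have hst : t u < s := by
      simp only [hWdef] at hw
      rw [hsdef, lt_div_iff₀ hupos]; nlinarith
    have hnn : ∀ i ∈ Finset.Icc 1 u, 0 ≤ s - t i := by
      intro i hi
      obtain ⟨hi1, hi2⟩ := Finset.mem_Icc.1 hi
      have := htmono i u hi1 hi2 hur
      linarith
    have hcardu : (Finset.Icc 1 u).card = u := by
      rw [Nat.card_Icc]; omega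
    have hsum : ∑ i ∈ Finset.Icc 1 u, (s - t i) = w := by
      rw [Finset.sum_sub_distrib, Finset.sum_const, hcardu, nsmul_eq_mul]
      simp only [hTdef] at hus ⊢
      linarith
    constructor
    · apply ENNReal.ofReal_le_ofReal
      have hcardr : (Finset.Icc 1 r).card = r := by rw [Nat.card_Icc]; omega
      set x' : ℕ → ℝ := fun i => if i ≤ u then s - t i else 0 with hx'def
      have hx'nn : ∀ i ∈ Finset.Icc 1 r, 0 ≤ x' i := by
        intro i hi
        by_cases h : i ≤ u
        · simp only [hx'def, if_pos h]
          exact hnn i (Finset.mem_Icc.2 ⟨(Finset.mem_Icc.1 hi).1, h⟩)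
        · simp [hx'def, if_neg h]
      have hIccIoc : ∀ v : ℕ, Finset.Icc 1 v = Finset.Ioc 0 v := by
        intro v; rw [← Finset.Icc_add_one_left_eq_Ioc]; rfl
      have hsum' : ∑ i ∈ Finset.Icc 1 r, x' i = w := by
        rw [hIccIoc, ← Finset.sum_Ioc_consecutive x' (Nat.zero_le u) hur]
        have e1 : ∑ i ∈ Finset.Ioc 0 u, x' i = ∑ i ∈ Finset.Ioc 0 u, (s - t i) := by
          apply Finset.sum_congr rfl
          intro i hi
          simp [hx'def, (Finset.mem_Ioc.1 hi).2]
        have e2 : ∑ i ∈ Finset.Ioc u r, x' i = 0 := by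
          apply Finset.sum_eq_zero
          intro i hi
          simp [hx'def, Nat.not_le.2 (Finset.mem_Ioc.1 hi).1]
        rw [e1, e2, add_zero, ← hIccIoc, hsum]
      have hprod' : ∏ i ∈ Finset.Icc 1 r, F (x' i)
          = ∏ i ∈ Finset.Icc 1 u, F (s - t i) := by
        rw [hIccIoc r, ← Finset.prod_Ioc_consecutive (fun i => F (x' i)) (Nat.zero_le u) hur]
        have e1 : ∏ i ∈ Finset.Ioc 0 u, F (x' i) = ∏ i ∈ Finset.Ioc 0 u, F (s - t i) := by
          apply Finset.prod_congr rfl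
          intro i hi
          simp [hx'def, (Finset.mem_Ioc.1 hi).2]
        have e2 : ∏ i ∈ Finset.Ioc u r, F (x' i) = 1 := by
          apply Finset.prod_eq_one
          intro i hi
          simp [hx'def, Nat.not_le.2 (Finset.mem_Ioc.1 hi).1, hF00]
        rw [e1, e2, mul_one, ← hIccIoc]
      have hj := jensenF_le hF0 hc (Finset.Icc 1 r)
        (Finset.nonempty_Icc.2 hr) x' hx'nn
      rw [hcardr, hsum', hprod'] at hj
      exact hj
    · apply ENNReal.ofReal_le_ofReal
      have h := prodF_le hF0 hF00 hc (Finset.Icc 1 u) (fun i => s - t i) hnn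
      rwa [hsum] at h
  -- main induction (downward in m)
  have main : ∀ k m : ℕ, 1 ≤ m → m + k = r →
      (∫⁻ w in Set.Ioi (W m), ENNReal.ofReal (F (w / (r : ℝ)) ^ r)
        ≤ (∑ u ∈ Finset.Ico m r, (u : ℝ≥0∞) *
              ∫⁻ s in Set.Ioc (t u) (t (u + 1)),
                ENNReal.ofReal (∏ i ∈ Finset.Icc 1 u, F (s - t i))) +
          (r : ℝ≥0∞) * ∫⁻ s in Set.Ioi (t r),
              ENNReal.ofReal (∏ i ∈ Finset.Icc 1 r, F (s - t i)))
      ∧ ((∑ u ∈ Finset.Ico m r, (u : ℝ≥0∞) *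
              ∫⁻ s in Set.Ioc (t u) (t (u + 1)),
                ENNReal.ofReal (∏ i ∈ Finset.Icc 1 u, F (s - t i))) +
          (r : ℝ≥0∞) * ∫⁻ s in Set.Ioi (t r),
              ENNReal.ofReal (∏ i ∈ Finset.Icc 1 r, F (s - t i))
        ≤ ∫⁻ w in Set.Ioi (W m), ENNReal.ofReal (F w)) := by
    intro k
    induction k with
    | zero =>
      intro m hm hmr
      have hmr' : m = r := by omega
      subst hmr'
      rw [Finset.Ico_self, Finset.sum_empty, zero_add]
      have htail : (m : ℝ≥0∞) * ∫⁻ s in Set.Ioi (t m),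
            ENNReal.ofReal (∏ i ∈ Finset.Icc 1 m, F (s - t i))
          = ∫⁻ w in Set.Ioi (W m),
              ENNReal.ofReal (∏ i ∈ Finset.Icc 1 m, F ((w + T m) / (m : ℝ) - t i)) := by
        rw [hsub m hm _ (hGmeas m) _ measurableSet_Ioi, hpreIoi m hm]
      rw [htail]
      constructor
      · apply setLIntegral_mono ((Finset.measurable_prod _ fun i _ =>
          hFmeas.comp ((measurable_id.add_const (T m)).div_const _ |>.sub_const (t i))).ennreal_ofReal)
        intro w hw
        exact (hkey m hm le_rfl w hw).1
      · apply setLIntegral_mono hFmeas.ennreal_ofReal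
        intro w hw
        exact (hkey m hm le_rfl w hw).2
    | succ k ih =>
      intro m hm hmr
      have hmlt : m < r := by omega
      have hm1 : W m ≤ W (m + 1) := hWmono m hm (by omega)
      obtain ⟨ih1, ih2⟩ := ih (m + 1) (by omega) (by omega)
      rw [Finset.sum_eq_sum_Ico_succ_bot hmlt]
      have hsplit : ∀ g : ℝ → ℝ≥0∞, ∫⁻ w in Set.Ioi (W m), g w
          = (∫⁻ w in Set.Ioc (W m) (W (m + 1)), g w) + ∫⁻ w in Set.Ioi (W (m + 1)), g w := by
        intro g
        rw [← Set.Ioc_union_Ioi_eq_Ioi hm1,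
          lintegral_union measurableSet_Ioi (Set.Ioc_disjoint_Ioi le_rfl)]
      have hfirst : (m : ℝ≥0∞) * ∫⁻ s in Set.Ioc (t m) (t (m + 1)),
            ENNReal.ofReal (∏ i ∈ Finset.Icc 1 m, F (s - t i))
          = ∫⁻ w in Set.Ioc (W m) (W (m + 1)),
              ENNReal.ofReal (∏ i ∈ Finset.Icc 1 m, F ((w + T m) / (m : ℝ) - t i)) := by
        rw [hsub m hm _ (hGmeas m) _ measurableSet_Ioc, hpreIoc m hm, hWs m hm]
      constructor
      · rw [hsplit, hfirst, add_assoc]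
        refine add_le_add ?_ ih1
        apply setLIntegral_mono' measurableSet_Ioc
        intro w hw
        exact (hkey m hm hmlt.le w hw.1).1
      · rw [hsplit, hfirst, add_assoc]
        refine add_le_add ?_ ih2
        apply setLIntegral_mono' measurableSet_Ioc
        intro w hw
        exact (hkey m hm hmlt.le w hw.1).2
  obtain ⟨h1, h2⟩ := main (r - 1) 1 le_rfl (by omega)
  rw [hW1] at h1 h2
  refine ⟨le_trans (le_of_eq ?_) h1, h2⟩
  -- r * ∫_{Ioi 0} ofReal (F x ^ r) = ∫_{Ioi 0} ofReal (F (x/r) ^ r)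
  have hrpos : (0 : ℝ) < r := by exact_mod_cast hr
  have hmeas : Measurable fun x : ℝ => ENNReal.ofReal (F x ^ r) :=
    (hFmeas.pow_const r).ennreal_ofReal
  rw [← ENNReal.ofReal_natCast,
    lintegral_scale_shift hmeas hrpos 0 measurableSet_Ioi]
  have hpre : (fun w : ℝ => (w + 0) / (r : ℝ)) ⁻¹' Set.Ioi 0 = Set.Ioi 0 := by
    ext w
    simp only [Set.mem_preimage, Set.mem_Ioi, add_zero, lt_div_iff₀ hrpos, zero_mul]
  rw [hpre]
  apply setLIntegral_congr_fun measurableSet_Ioi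
  exact fun w _ => by rw [add_zero]
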